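/- Let r, s be natural numbers with s ≥ 1 and let M be the finite cyclic monoid of index r and period s: M = {1, a, a², …, a^{r+s−1}} with multiplication a^i·a^j = a^{[i+j]}, where [n] = n for n < r+s and [n] = r + ((n−r) mod s) for n ≥ r+s. Let R = M ∪ {⊥, ⊤} with multiplication extended so that ⊥ is absorbing on R and ⊤ is absorbing on R \ {⊥}, and ordered by: ⊥ is the bottom, ⊤ is the top, and for 0 ≤ i, j ≤ r+s−1, a^i ≤ a^j iff j = i + n·s for some natural number n. Then R is a lattice in which multiplication is order-preserving and distributes over binary joins; hence R is the reduct of a residuated lattice (a compact unilinear residuated lattice). -/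

import Mathlib

/-- The normal form of an exponent in the cyclic monoid of index `r` and period `s`. -/
def cycIdx (r s n : ℕ) : ℕ := if n < r + s then n else r + (n - r) % s

/-- Multiplication `a^i · a^j = a^{[i+j]}` in the finite cyclic monoid of index `r` and
period `s`, realized on `Fin (r+s)`. -/
def cycMul (r s : ℕ) (hs : 1 ≤ s) (i j : Fin (r + s)) : Fin (r + s) :=
  ⟨cycIdx r s (i.val + j.val), by
    unfold cycIdx
    split
    · omega
    · have h : (i.val + j.val - r) % s < s := Nat.mod_lt _ hs
      omega⟩

/-- Multiplication on `R = M ∪ {⊥, ⊤}`: `⊥ = Sum.inr false` is absorbing on `R` and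
`⊤ = Sum.inr true` is absorbing on `R \ {⊥}`. -/
def cycRMul (r s : ℕ) (hs : 1 ≤ s) :
    (Fin (r + s) ⊕ Bool) → (Fin (r + s) ⊕ Bool) → (Fin (r + s) ⊕ Bool)
  | Sum.inr false, _ => Sum.inr false
  | _, Sum.inr false => Sum.inr false
  | Sum.inr true, _ => Sum.inr true
  | _, Sum.inr true => Sum.inr true
  | Sum.inl i, Sum.inl j => Sum.inl (cycMul r s hs i j)

/-- The order on `R = M ∪ {⊥, ⊤}`: `⊥` is the bottom, `⊤` is the top, and
`a^i ≤ a^j` iff `j = i + n·s` for some natural number `n`. -/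
def cycLe (r s : ℕ) : (Fin (r + s) ⊕ Bool) → (Fin (r + s) ⊕ Bool) → Prop
  | Sum.inr false, _ => True
  | _, Sum.inr true => True
  | Sum.inl i, Sum.inl j => ∃ n : ℕ, j.val = i.val + n * s
  | _, _ => False

open scoped Classical in
/-- The join operation for the order `cycLe`. -/
noncomputable def cycJoin (r s : ℕ) (x y : Fin (r + s) ⊕ Bool) : Fin (r + s) ⊕ Bool :=
  if cycLe r s x y then y else if cycLe r s y x then x else Sum.inr true

open scoped Classical in
/-- The meet operation for the order `cycLe`. -/
noncomputable def cycMeet (r s : ℕ) (x y : Fin (r + s) ⊕ Bool) : Fin (r + s) ⊕ Bool :=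
  if cycLe r s x y then x else if cycLe r s y x then y else Sum.inr false

lemma cycIdx_spec (r s : ℕ) (hs : 1 ≤ s) (a : ℕ) :
    ∃ p, a = cycIdx r s a + p * s ∧ cycIdx r s a < r + s ∧
      (r + s ≤ a → r ≤ cycIdx r s a) ∧ (p ≠ 0 → r + s ≤ a) := by
  unfold cycIdx
  split_ifs with h
  · exact ⟨0, by omega, by omega, by omega, by omega⟩
  · have h1 : (a - r) % s + (a - r) / s * s = a - r := Nat.mod_add_div' _ _
    have h2 : (a - r) % s < s := Nat.mod_lt _ hs
    exact ⟨(a - r) / s, by omega, by omega, by omega, by omega⟩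

lemma cycIdx_eq (r s : ℕ) (hs : 1 ≤ s) {a b p : ℕ} (hb : b < r + s)
    (hab : a = b + p * s) (hp : p ≠ 0 → r ≤ b) : cycIdx r s a = b := by
  unfold cycIdx
  split_ifs with h
  · rcases Nat.eq_zero_or_pos p with hp0 | hp0
    · subst hp0; omega
    · have h1 : 1 * s ≤ p * s := Nat.mul_le_mul_right s hp0
      have := hp (by omega)
      omega
  · have hps : p ≠ 0 := by rintro rfl; omega
    have hrb := hp hps
    have h2 : a - r = (b - r) + p * s := by omega
    rw [h2, Nat.add_mul_mod_self_right, Nat.mod_eq_of_lt (by omega)]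
    omega

lemma cycIdx_idem_add (r s : ℕ) (hs : 1 ≤ s) (a b : ℕ) :
    cycIdx r s (cycIdx r s a + b) = cycIdx r s (a + b) := by
  obtain ⟨p, hp1, hlt, hge, hp0⟩ := cycIdx_spec r s hs a
  obtain ⟨q, hq1, hlt2, hge2, hq0⟩ := cycIdx_spec r s hs (cycIdx r s a + b)
  have hpq : (p + q) * s = p * s + q * s := Nat.add_mul _ _ _
  refine (cycIdx_eq r s hs (b := cycIdx r s (cycIdx r s a + b)) (p := p + q) hlt2
    (by omega) ?_).symm
  intro hne
  rcases Nat.eq_zero_or_pos q with h0 | h0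
  · subst h0
    have hpne : p ≠ 0 := by omega
    have := hge (hp0 hpne)
    omega
  · exact hge2 (hq0 (by omega))

lemma cycIdx_add_mul (r s : ℕ) (hs : 1 ≤ s) (a n : ℕ) :
    ∃ m, cycIdx r s (a + n * s) = cycIdx r s a + m * s := by
  obtain ⟨p, hp1, hlt, hge, hp0⟩ := cycIdx_spec r s hs a
  obtain ⟨q, hq1, hlt2, hge2, hq0⟩ := cycIdx_spec r s hs (a + n * s)
  by_cases hc : q ≤ p + n
  · refine ⟨p + n - q, ?_⟩
    have h1 : (p + n - q) * s = (p + n) * s - q * s := Nat.sub_mul _ _ _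
    have h2 : (p + n) * s = p * s + n * s := Nat.add_mul _ _ _
    have h3 : q * s ≤ (p + n) * s := Nat.mul_le_mul_right s hc
    omega
  · exfalso
    have h1 : (q - (p + n)) * s = q * s - (p + n) * s := Nat.sub_mul _ _ _
    have h2 : (p + n) * s = p * s + n * s := Nat.add_mul _ _ _
    have h3 : 1 * s ≤ (q - (p + n)) * s := Nat.mul_le_mul_right s (by omega)
    have h6 : (p + n) * s ≤ q * s := Nat.mul_le_mul_right s (by omega)
    have h4 := hq0 (by omega)
    have h5 := hge2 h4
    omega

lemma cyc_comp (r s : ℕ) (hs : 1 ≤ s) {i j k m : ℕ}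
    (h : cycIdx r s (i + k) = cycIdx r s (i + j) + m * s) :
    (∃ n, k = j + n * s) ∨ (∃ n, j = k + n * s) := by
  obtain ⟨p, hp1, -, -, -⟩ := cycIdx_spec r s hs (i + j)
  obtain ⟨q, hq1, -, -, -⟩ := cycIdx_spec r s hs (i + k)
  by_cases hc : p ≤ m + q
  · refine Or.inl ⟨m + q - p, ?_⟩
    have h1 : (m + q - p) * s = (m + q) * s - p * s := Nat.sub_mul _ _ _
    have h2 : (m + q) * s = m * s + q * s := Nat.add_mul _ _ _
    have h3 : p * s ≤ (m + q) * s := Nat.mul_le_mul_right s hc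
    omega
  · refine Or.inr ⟨p - (m + q), ?_⟩
    have h1 : (p - (m + q)) * s = p * s - (m + q) * s := Nat.sub_mul _ _ _
    have h2 : (m + q) * s = m * s + q * s := Nat.add_mul _ _ _
    have h3 : (m + q) * s ≤ p * s := Nat.mul_le_mul_right s (by omega)
    omega

lemma cycIdx_add_idem (r s : ℕ) (hs : 1 ≤ s) (a b : ℕ) :
    cycIdx r s (a + cycIdx r s b) = cycIdx r s (a + b) := by
  rw [Nat.add_comm a, cycIdx_idem_add r s hs, Nat.add_comm]

section RLemmas

variable (r s : ℕ) (hs : 1 ≤ s)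

local notation "R" => (Fin (r + s) ⊕ Bool)

lemma cyc_refl : ∀ x : R, cycLe r s x x := by
  rintro (i | (_ | _))
  · exact ⟨0, by omega⟩
  · trivial
  · trivial

lemma cyc_le_top : ∀ x : R, cycLe r s x (Sum.inr true) := by
  rintro (i | (_ | _)) <;> trivial

lemma cyc_bot_le : ∀ x : R, cycLe r s (Sum.inr false) x := by
  rintro (i | (_ | _)) <;> trivial

lemma cyc_antisymm : ∀ x y : R, cycLe r s x y → cycLe r s y x → x = y := by
  rintro (i | (_ | _)) (j | (_ | _)) h1 h2 <;>
    simp only [cycLe] at h1 h2 <;> try rfl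
  obtain ⟨n, hn⟩ := h1
  obtain ⟨m, hm⟩ := h2
  have : i = j := Fin.ext (by omega)
  rw [this]

lemma cyc_trans : ∀ x y z : R, cycLe r s x y → cycLe r s y z → cycLe r s x z := by
  rintro (i | (_ | _)) (j | (_ | _)) (k | (_ | _)) h1 h2 <;>
    simp only [cycLe] at h1 h2 ⊢ <;> try trivial
  obtain ⟨n, hn⟩ := h1
  obtain ⟨m, hm⟩ := h2
  have := Nat.add_mul n m s
  exact ⟨n + m, by omega⟩

lemma cyc_incomp_inl : ∀ {y z : R}, ¬ cycLe r s y z → ¬ cycLe r s z y →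
    ∃ j k, y = Sum.inl j ∧ z = Sum.inl k := by
  rintro (j | (_ | _)) (k | (_ | _)) h1 h2 <;>
    first
      | exact ⟨_, _, rfl, rfl⟩
      | exact absurd trivial h1
      | exact absurd trivial h2

lemma cyc_incomp_ub : ∀ {y z w : R}, ¬ cycLe r s y z → ¬ cycLe r s z y →
    cycLe r s y w → cycLe r s z w → w = Sum.inr true := by
  intro y z w h1 h2 hy hz
  obtain ⟨j, k, rfl, rfl⟩ := cyc_incomp_inl r s h1 h2
  rcases w with l | (_ | _)
  · obtain ⟨n, hn⟩ := hy
    obtain ⟨m, hm⟩ := hz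
    exfalso
    rcases le_or_gt m n with hc | hc
    · refine h1 ⟨n - m, ?_⟩
      have e1 : (n - m) * s = n * s - m * s := Nat.sub_mul _ _ _
      have e2 : m * s ≤ n * s := Nat.mul_le_mul_right s hc
      omega
    · refine h2 ⟨m - n, ?_⟩
      have e1 : (m - n) * s = m * s - n * s := Nat.sub_mul _ _ _
      have e2 : n * s ≤ m * s := Nat.mul_le_mul_right s (le_of_lt hc)
      omega
  · exact absurd hy (by simp [cycLe])
  · rfl

lemma cyc_incomp_lb : ∀ {y z w : R}, ¬ cycLe r s y z → ¬ cycLe r s z y →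
    cycLe r s w y → cycLe r s w z → w = Sum.inr false := by
  intro y z w h1 h2 hy hz
  obtain ⟨j, k, rfl, rfl⟩ := cyc_incomp_inl r s h1 h2
  rcases w with l | (_ | _)
  · obtain ⟨n, hn⟩ := hy
    obtain ⟨m, hm⟩ := hz
    exfalso
    rcases le_or_gt m n with hc | hc
    · refine h2 ⟨n - m, ?_⟩
      have e1 : (n - m) * s = n * s - m * s := Nat.sub_mul _ _ _
      have e2 : m * s ≤ n * s := Nat.mul_le_mul_right s hc
      omega
    · refine h1 ⟨m - n, ?_⟩
      have e1 : (m - n) * s = m * s - n * s := Nat.sub_mul _ _ _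
      have e2 : n * s ≤ m * s := Nat.mul_le_mul_right s (le_of_lt hc)
      omega
  · rfl
  · exact absurd hy (by simp [cycLe])

lemma cycRMul_comm : ∀ x y : R, cycRMul r s hs x y = cycRMul r s hs y x := by
  rintro (i | (_ | _)) (j | (_ | _)) <;> try rfl
  simp only [cycRMul, cycMul]
  congr 1
  exact Fin.ext (by simp [Nat.add_comm])

lemma cyc_mono_left : ∀ (x : R) {y z : R}, cycLe r s y z →
    cycLe r s (cycRMul r s hs x y) (cycRMul r s hs x z) := by
  rintro (i | (_ | _)) (j | (_ | _)) (k | (_ | _)) h <;>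
    simp only [cycLe, cycRMul, cycMul] at h ⊢ <;> try trivial
  obtain ⟨n, hn⟩ := h
  rw [hn, ← Nat.add_assoc]
  exact cycIdx_add_mul r s hs _ n

lemma cycRMul_assoc : ∀ x y z : R,
    cycRMul r s hs (cycRMul r s hs x y) z = cycRMul r s hs x (cycRMul r s hs y z) := by
  rintro (i | (_ | _)) (j | (_ | _)) (k | (_ | _)) <;> try rfl
  simp only [cycRMul, cycMul]
  congr 1
  apply Fin.ext
  show cycIdx r s (cycIdx r s (↑i + ↑j) + ↑k) = cycIdx r s (↑i + cycIdx r s (↑j + ↑k))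
  rw [cycIdx_idem_add r s hs, cycIdx_add_idem r s hs, Nat.add_assoc]

lemma cycRMul_one : ∀ x : R,
    cycRMul r s hs (Sum.inl (⟨0, Nat.lt_of_lt_of_le hs (Nat.le_add_left s r)⟩ : Fin (r + s))) x = x := by
  rintro (i | (_ | _)) <;> try rfl
  simp only [cycRMul, cycMul]
  congr 1
  apply Fin.ext
  show cycIdx r s (0 + ↑i) = ↑i
  rw [Nat.zero_add]
  unfold cycIdx
  rw [if_pos i.isLt]

lemma cyc_incomp_mul {j k : Fin (r + s)} (i : Fin (r + s))
    (h1 : ¬ cycLe r s (Sum.inl j) (Sum.inl k)) (h2 : ¬ cycLe r s (Sum.inl k) (Sum.inl j)) :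
    ¬ cycLe r s (Sum.inl (cycMul r s hs i j) : R) (Sum.inl (cycMul r s hs i k)) ∧
    ¬ cycLe r s (Sum.inl (cycMul r s hs i k) : R) (Sum.inl (cycMul r s hs i j)) := by
  constructor
  · rintro ⟨m, hm⟩
    rcases cyc_comp r s hs (i := (i : ℕ)) (j := (j : ℕ)) (k := (k : ℕ)) hm with h | h
    · exact h1 h
    · exact h2 h
  · rintro ⟨m, hm⟩
    rcases cyc_comp r s hs (i := (i : ℕ)) (j := (k : ℕ)) (k := (j : ℕ)) hm with h | h
    · exact h2 h
    · exact h1 h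

lemma cyc_mul_join_left : ∀ x y z : R,
    cycRMul r s hs x (cycJoin r s y z) =
      cycJoin r s (cycRMul r s hs x y) (cycRMul r s hs x z) := by
  intro x y z
  by_cases h1 : cycLe r s y z
  · have h1' := cyc_mono_left r s hs x h1
    simp only [cycJoin, if_pos h1, if_pos h1']
  · by_cases h2 : cycLe r s z y
    · have h2' := cyc_mono_left r s hs x h2
      simp only [cycJoin, if_neg h1, if_pos h2]
      by_cases h3 : cycLe r s (cycRMul r s hs x y) (cycRMul r s hs x z)
      · rw [if_pos h3]
        exact cyc_antisymm r s _ _ h3 h2'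
      · rw [if_neg h3, if_pos h2']
    · simp only [cycJoin, if_neg h1, if_neg h2]
      obtain ⟨j, k, rfl, rfl⟩ := cyc_incomp_inl r s h1 h2
      rcases x with i | (_ | _)
      · obtain ⟨hm1, hm2⟩ := cyc_incomp_mul r s hs i h1 h2
        show (Sum.inr true : R) = _
        rw [show cycRMul r s hs (Sum.inl i) (Sum.inl j) = Sum.inl (cycMul r s hs i j) from rfl,
          show cycRMul r s hs (Sum.inl i) (Sum.inl k) = Sum.inl (cycMul r s hs i k) from rfl,
          if_neg hm1, if_neg hm2]
      · have hb : cycLe r s (cycRMul r s hs (Sum.inr false) (Sum.inl j))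
            (cycRMul r s hs (Sum.inr false) (Sum.inl k)) := trivial
        rw [if_pos hb]; rfl
      · have hb : cycLe r s (cycRMul r s hs (Sum.inr true) (Sum.inl j))
            (cycRMul r s hs (Sum.inr true) (Sum.inl k)) := trivial
        rw [if_pos hb]; rfl

lemma cyc_chain {i j j' k : Fin (r + s)}
    (h1 : cycLe r s (Sum.inl (cycMul r s hs i j) : R) (Sum.inl k))
    (h2 : cycLe r s (Sum.inl (cycMul r s hs i j') : R) (Sum.inl k)) :
    cycLe r s (Sum.inl j : R) (Sum.inl j') ∨ cycLe r s (Sum.inl j' : R) (Sum.inl j) := by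
  obtain ⟨m, hm⟩ := h1
  obtain ⟨m', hm'⟩ := h2
  simp only [cycMul] at hm hm'
  rcases le_or_gt m' m with hc | hc
  · refine cyc_comp r s hs (i := (i : ℕ)) (j := (j : ℕ)) (k := (j' : ℕ)) (m := m - m') ?_
    have e1 : (m - m') * s = m * s - m' * s := Nat.sub_mul _ _ _
    have e2 : m' * s ≤ m * s := Nat.mul_le_mul_right s hc
    omega
  · refine (cyc_comp r s hs (i := (i : ℕ)) (j := (j' : ℕ)) (k := (j : ℕ)) (m := m' - m) ?_).symm
    have e1 : (m' - m) * s = m' * s - m * s := Nat.sub_mul _ _ _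
    have e2 : m * s ≤ m' * s := Nat.mul_le_mul_right s (le_of_lt hc)
    omega

open scoped Classical in
lemma cyc_residual_left : ∀ x z : R,
    ∃ m, cycLe r s (cycRMul r s hs x m) z ∧
      ∀ y, cycLe r s (cycRMul r s hs x y) z → cycLe r s y m := by
  rintro (i | (_ | _)) (k | (_ | _))
  · -- x = inl i, z = inl k
    by_cases hS : ∃ j : Fin (r + s), cycLe r s (Sum.inl (cycMul r s hs i j) : R) (Sum.inl k)
    · classical
      set T : Finset (Fin (r + s)) :=
        Finset.univ.filter (fun j => cycLe r s (Sum.inl (cycMul r s hs i j) : R) (Sum.inl k))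
        with hT
      have hTne : T.Nonempty := by
        obtain ⟨j, hj⟩ := hS
        exact ⟨j, by simp [hT, hj]⟩
      obtain ⟨b, hbT, hmax⟩ := Finset.exists_max_image T Fin.val hTne
      have hb : cycLe r s (Sum.inl (cycMul r s hs i b) : R) (Sum.inl k) :=
        (Finset.mem_filter.mp hbT).2
      refine ⟨Sum.inl b, hb, ?_⟩
      rintro (j | (_ | _)) hy
      · have hy' : cycLe r s (Sum.inl (cycMul r s hs i j) : R) (Sum.inl k) := hy
        have hjT : j ∈ T := Finset.mem_filter.mpr ⟨Finset.mem_univ _, hy'⟩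
        rcases cyc_chain r s hs hy' hb with h | ⟨n, hn⟩
        · exact h
        · have hle := hmax j hjT
          exact ⟨0, by omega⟩
      · trivial
      · exact hy.elim
    · refine ⟨Sum.inr false, trivial, ?_⟩
      rintro (j | (_ | _)) hy
      · exact absurd hy (fun h => hS ⟨j, h⟩)
      · trivial
      · exact hy.elim
  · -- z = ⊥
    refine ⟨Sum.inr false, trivial, ?_⟩
    rintro (j | (_ | _)) hy <;> first | trivial | exact hy.elim
  · -- z = ⊤
    exact ⟨Sum.inr true, trivial, fun y _ => cyc_le_top r s y⟩
  · -- x = ⊥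
    exact ⟨Sum.inr true, trivial, fun y _ => cyc_le_top r s y⟩
  · exact ⟨Sum.inr true, trivial, fun y _ => cyc_le_top r s y⟩
  · exact ⟨Sum.inr true, trivial, fun y _ => cyc_le_top r s y⟩
  · -- x = ⊤, z = inl k
    refine ⟨Sum.inr false, trivial, ?_⟩
    rintro (j | (_ | _)) hy <;> first | trivial | exact hy.elim
  · refine ⟨Sum.inr false, trivial, ?_⟩
    rintro (j | (_ | _)) hy <;> first | trivial | exact hy.elim
  · exact ⟨Sum.inr true, trivial, fun y _ => cyc_le_top r s y⟩

end RLemmas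
/-- The extension of a finite cyclic monoid of index `r` and period `s ≥ 1` by bounds
`⊥, ⊤`, with the unilinear order, is a lattice-ordered monoid whose multiplication is
order-preserving and distributes over binary joins; hence it is the reduct of a
(compact unilinear) residuated lattice. -/
theorem stmt_16 (r s : ℕ) (hs : 1 ≤ s) :
    -- cycLe is a partial order
    (∀ x : Fin (r + s) ⊕ Bool, cycLe r s x x) ∧
    (∀ x y : Fin (r + s) ⊕ Bool, cycLe r s x y → cycLe r s y x → x = y) ∧
    (∀ x y z : Fin (r + s) ⊕ Bool, cycLe r s x y → cycLe r s y z → cycLe r s x z) ∧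
    -- with bottom `⊥` and top `⊤`
    (∀ x : Fin (r + s) ⊕ Bool, cycLe r s (Sum.inr false) x ∧ cycLe r s x (Sum.inr true)) ∧
    -- cycJoin is the least upper bound and cycMeet the greatest lower bound
    (∀ x y : Fin (r + s) ⊕ Bool, cycLe r s x (cycJoin r s x y) ∧ cycLe r s y (cycJoin r s x y) ∧
      ∀ z, cycLe r s x z → cycLe r s y z → cycLe r s (cycJoin r s x y) z) ∧
    (∀ x y : Fin (r + s) ⊕ Bool, cycLe r s (cycMeet r s x y) x ∧ cycLe r s (cycMeet r s x y) y ∧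
      ∀ z, cycLe r s z x → cycLe r s z y → cycLe r s z (cycMeet r s x y)) ∧
    -- the multiplication is a monoid operation with identity `a^0`
    (∀ x y z : Fin (r + s) ⊕ Bool,
      cycRMul r s hs (cycRMul r s hs x y) z = cycRMul r s hs x (cycRMul r s hs y z)) ∧
    (∀ x : Fin (r + s) ⊕ Bool,
      cycRMul r s hs (Sum.inl (⟨0, by omega⟩ : Fin (r + s))) x = x ∧
      cycRMul r s hs x (Sum.inl (⟨0, by omega⟩ : Fin (r + s))) = x) ∧
    -- multiplication is order-preserving
    (∀ x y z : Fin (r + s) ⊕ Bool, cycLe r s y z →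
      cycLe r s (cycRMul r s hs x y) (cycRMul r s hs x z) ∧
      cycLe r s (cycRMul r s hs y x) (cycRMul r s hs z x)) ∧
    -- multiplication distributes over binary joins
    (∀ x y z : Fin (r + s) ⊕ Bool,
      cycRMul r s hs x (cycJoin r s y z) = cycJoin r s (cycRMul r s hs x y) (cycRMul r s hs x z) ∧
      cycRMul r s hs (cycJoin r s y z) x = cycJoin r s (cycRMul r s hs y x) (cycRMul r s hs z x)) ∧
    -- the division sets have maxima, so we get the reduct of a residuated lattice
    (∀ x z : Fin (r + s) ⊕ Bool,
      (∃ m, cycLe r s (cycRMul r s hs x m) z ∧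
        ∀ y, cycLe r s (cycRMul r s hs x y) z → cycLe r s y m) ∧
      (∃ m, cycLe r s (cycRMul r s hs m x) z ∧
        ∀ y, cycLe r s (cycRMul r s hs y x) z → cycLe r s y m)) := by
  refine ⟨cyc_refl r s, cyc_antisymm r s, cyc_trans r s,
    fun x => ⟨cyc_bot_le r s x, cyc_le_top r s x⟩, ?_, ?_,
    cycRMul_assoc r s hs,
    fun x => ⟨cycRMul_one r s hs x, by rw [cycRMul_comm r s hs]; exact cycRMul_one r s hs x⟩,
    ?_, ?_, ?_⟩
  · -- join is lub
    intro x y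
    by_cases h1 : cycLe r s x y
    · simp only [cycJoin, if_pos h1]
      exact ⟨h1, cyc_refl r s y, fun z _ hy => hy⟩
    · by_cases h2 : cycLe r s y x
      · simp only [cycJoin, if_neg h1, if_pos h2]
        exact ⟨cyc_refl r s x, h2, fun z hx _ => hx⟩
      · simp only [cycJoin, if_neg h1, if_neg h2]
        refine ⟨cyc_le_top r s x, cyc_le_top r s y, fun z hx hy => ?_⟩
        rw [cyc_incomp_ub r s h1 h2 hx hy]
        exact cyc_refl r s _
  · -- meet is glb
    intro x y
    by_cases h1 : cycLe r s x y
    · simp only [cycMeet, if_pos h1]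
      exact ⟨cyc_refl r s x, h1, fun z hx _ => hx⟩
    · by_cases h2 : cycLe r s y x
      · simp only [cycMeet, if_neg h1, if_pos h2]
        exact ⟨h2, cyc_refl r s y, fun z _ hy => hy⟩
      · simp only [cycMeet, if_neg h1, if_neg h2]
        refine ⟨cyc_bot_le r s x, cyc_bot_le r s y, fun z hx hy => ?_⟩
        rw [cyc_incomp_lb r s h1 h2 hx hy]
        exact cyc_refl r s _
  · -- monotone
    intro x y z h
    refine ⟨cyc_mono_left r s hs x h, ?_⟩
    rw [cycRMul_comm r s hs y x, cycRMul_comm r s hs z x]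
    exact cyc_mono_left r s hs x h
  · -- distributive over joins
    intro x y z
    refine ⟨cyc_mul_join_left r s hs x y z, ?_⟩
    rw [cycRMul_comm r s hs (cycJoin r s y z) x, cyc_mul_join_left r s hs x y z,
      cycRMul_comm r s hs x y, cycRMul_comm r s hs x z]
  · -- residuals exist
    intro x z
    refine ⟨cyc_residual_left r s hs x z, ?_⟩
    obtain ⟨m, hm1, hm2⟩ := cyc_residual_left r s hs x z
    refine ⟨m, ?_, fun y hy => hm2 y ?_⟩
    · rw [cycRMul_comm r s hs m x]
      exact hm1
    · rw [cycRMul_comm r s hs x y]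
      exact hy
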